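/- Let H be a complex Hilbert space, G a bounded selfadjoint operator with decomposition H = H₊ ⊕ H₋ ⊕ N(G) and G = G₊ ⊕ (−G₋) ⊕ 0, G± positive definite with ‖G₊‖ = ‖G₋‖ = 1/κ. Write u₀ = v⁺ + w⁺ + v⁻ + w⁻ + u₀⁰ with v± ∈ N± = ker(I ∓ κG), w± ∈ H± ⊖ N±, u₀⁰ ∈ N(G). If v⁺ ≠ 0 and v⁻ ≠ 0, then there exists γ ∈ (−κ, κ) such that y₀ := (I + γG)⁻¹ u₀ satisfies ⟨G y₀, y₀⟩ = 0, and the set {y ∈ Q(G) : (I + γ'G)y = u₀ for some γ' ∈ [−κ, κ]} equals the singleton {(I + γG)⁻¹ u₀}. -/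

import Mathlib

open scoped InnerProductSpace
open Complex

section Aux
variable {H : Type*} [NormedAddCommGroup H] [InnerProductSpace ℂ H]

lemma triple_zero {p m z : H}
    (h1 : ⟪p, m⟫_ℂ = 0) (h2 : ⟪p, z⟫_ℂ = 0) (h3 : ⟪m, z⟫_ℂ = 0)
    (hs : p + m + z = 0) : p = 0 ∧ m = 0 ∧ z = 0 := by
  have hp : ⟪p, p⟫_ℂ = 0 := by
    have := congrArg (fun x => ⟪p, x⟫_ℂ) hs
    simpa [inner_add_right, h1, h2] using this
  have hm : ⟪m, m⟫_ℂ = 0 := by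
    have := congrArg (fun x => ⟪m, x⟫_ℂ) hs
    simpa [inner_add_right, inner_eq_zero_symm.mp h1, h3] using this
  have hz : ⟪z, z⟫_ℂ = 0 := by
    have := congrArg (fun x => ⟪z, x⟫_ℂ) hs
    simpa [inner_add_right, inner_eq_zero_symm.mp h2, inner_eq_zero_symm.mp h3] using this
  exact ⟨inner_self_eq_zero.mp hp, inner_self_eq_zero.mp hm, inner_self_eq_zero.mp hz⟩

lemma key_estimate [CompleteSpace H] (G : H →L[ℂ] H) (hG : IsSelfAdjoint G)
    (κ β : ℝ) (hκ : 0 < κ) (hβ : 0 ≤ β)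
    (Hp Hm : Submodule ℂ H)
    (hpm : ∀ x ∈ Hp, ∀ y ∈ Hm, ⟪x, y⟫_ℂ = 0)
    (hp0 : ∀ x ∈ Hp, ∀ y : H, G y = 0 → ⟪x, y⟫_ℂ = 0)
    (hm0 : ∀ x ∈ Hm, ∀ y : H, G y = 0 → ⟪x, y⟫_ℂ = 0)
    (hspan : ∀ x : H, ∃ p ∈ Hp, ∃ m ∈ Hm, ∃ z, G z = 0 ∧ x = p + m + z)
    (hinvp : ∀ x ∈ Hp, G x ∈ Hp) (hinvm : ∀ x ∈ Hm, G x ∈ Hm)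
    (hposp : ∀ x ∈ Hp, 0 ≤ (⟪G x, x⟫_ℂ).re)
    (hnegm : ∀ x ∈ Hm, (⟪G x, x⟫_ℂ).re ≤ -(β * ‖x‖ ^ 2))
    (hBp : ∀ x ∈ Hp, ‖G x‖ ≤ ‖x‖ / κ)
    (vp wp vm wm z₀ : H)
    (hvpP : vp ∈ Hp) (hwpP : wp ∈ Hp) (hvmM : vm ∈ Hm) (hwmM : wm ∈ Hm)
    (hz₀ : G z₀ = 0)
    (hGvm : G vm = -((κ : ℂ)⁻¹ • vm))
    (horth : ⟪wm, vm⟫_ℂ = 0)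
    (γ : ℝ) (hγ0 : 0 ≤ γ) (hγκ : γ < κ)
    (y : H) (hy : y + (γ : ℂ) • G y = vp + wp + vm + wm + z₀) :
    (⟪G y, y⟫_ℂ).re ≤ ‖vp + wp‖ ^ 2 / κ - β * ‖vm‖ ^ 2 / (1 - γ / κ) ^ 2 := by
  obtain ⟨a, ha, b, hb, c, hc, hyd⟩ := hspan y
  set s : ℝ := 1 - γ / κ with hs
  have hs0 : 0 < s := by
    have h1 : γ / κ < 1 := (div_lt_one hκ).mpr hγκ
    rw [hs]; linarith
  have hGy : G y = G a + G b := by rw [hyd]; simp [map_add, hc]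
  -- split the equation
  have hsum : (a + (γ : ℂ) • G a - (vp + wp)) + (b + (γ : ℂ) • G b - (vm + wm))
      + (c - z₀) = 0 := by
    have h := hy
    rw [hyd] at h
    simp only [map_add, hc, add_zero, smul_add] at h
    rw [show (a + (γ : ℂ) • G a - (vp + wp)) + (b + (γ : ℂ) • G b - (vm + wm))
        + (c - z₀) = (a + b + c + ((γ : ℂ) • G a + (γ : ℂ) • G b))
          - (vp + wp + vm + wm + z₀) from by abel, h, sub_self]
  have hPmem : a + (γ : ℂ) • G a - (vp + wp) ∈ Hp :=
    Submodule.sub_mem _ (Submodule.add_mem _ ha (Submodule.smul_mem _ _ (hinvp a ha)))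
      (Submodule.add_mem _ hvpP hwpP)
  have hMmem : b + (γ : ℂ) • G b - (vm + wm) ∈ Hm :=
    Submodule.sub_mem _ (Submodule.add_mem _ hb (Submodule.smul_mem _ _ (hinvm b hb)))
      (Submodule.add_mem _ hvmM hwmM)
  have hZker : G (c - z₀) = 0 := by rw [map_sub, hc, hz₀, sub_zero]
  obtain ⟨e1, e2, e3⟩ := triple_zero
    (hpm _ hPmem _ hMmem) (hp0 _ hPmem _ hZker) (hm0 _ hMmem _ hZker) hsum
  have hA : a + (γ : ℂ) • G a = vp + wp := sub_eq_zero.mp e1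
  have hB : b + (γ : ℂ) • G b = vm + wm := sub_eq_zero.mp e2
  -- bound on ‖a‖
  have hre : ∀ (u x : H), (⟪u + (γ : ℂ) • G u, x⟫_ℂ).re
      = (⟪u, x⟫_ℂ).re + γ * (⟪G u, x⟫_ℂ).re := by
    intro u x
    rw [inner_add_left, inner_smul_left, Complex.add_re, Complex.conj_ofReal,
      Complex.re_ofReal_mul]
  have hnorm_a : ‖a‖ ≤ ‖vp + wp‖ := by
    have h1 : ‖a‖ ^ 2 ≤ (⟪vp + wp, a⟫_ℂ).re := by
      have := hre a a
      rw [hA] at this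
      have h2 := hposp a ha
      have h3 : (⟪a, a⟫_ℂ).re = ‖a‖ ^ 2 := by
        simpa using inner_self_eq_norm_sq (𝕜 := ℂ) a
      nlinarith
    have h2 : (⟪vp + wp, a⟫_ℂ).re ≤ ‖vp + wp‖ * ‖a‖ := by
      calc (⟪vp + wp, a⟫_ℂ).re ≤ ‖⟪vp + wp, a⟫_ℂ‖ := Complex.re_le_norm _
        _ ≤ ‖vp + wp‖ * ‖a‖ := norm_inner_le_norm _ _
    nlinarith [norm_nonneg a, norm_nonneg (vp + wp)]
  -- upper bound for positive part
  have hGa_bound : (⟪G a, a⟫_ℂ).re ≤ ‖vp + wp‖ ^ 2 / κ := by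
    have h1 : (⟪G a, a⟫_ℂ).re ≤ ‖G a‖ * ‖a‖ := by
      calc (⟪G a, a⟫_ℂ).re ≤ ‖⟪G a, a⟫_ℂ‖ := Complex.re_le_norm _
        _ ≤ ‖G a‖ * ‖a‖ := norm_inner_le_norm _ _
    have h2 := hBp a ha
    have h3 : ‖G a‖ * ‖a‖ ≤ (‖a‖ / κ) * ‖a‖ :=
      mul_le_mul_of_nonneg_right h2 (norm_nonneg a)
    have h4 : (‖a‖ / κ) * ‖a‖ ≤ (‖vp + wp‖ / κ) * ‖vp + wp‖ := by
      have := norm_nonneg a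
      gcongr
    calc (⟪G a, a⟫_ℂ).re ≤ (‖a‖ / κ) * ‖a‖ := le_trans h1 h3
      _ ≤ (‖vp + wp‖ / κ) * ‖vp + wp‖ := h4
      _ = ‖vp + wp‖ ^ 2 / κ := by ring
  -- the N₋ component of y is large
  have hsmulvm : vm + (γ : ℂ) • G vm = (s : ℂ) • vm := by
    have hcast : ((s : ℂ)) = 1 - (γ : ℂ) * (κ : ℂ)⁻¹ := by
      rw [hs]; push_cast; ring
    rw [hGvm, hcast]
    module
  have hsym := hG.isSymmetric
  have hinner_y_vm : (s : ℂ) * ⟪y, vm⟫_ℂ = ((‖vm‖ ^ 2 : ℝ) : ℂ) := by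
    have h1 : ⟪y + (γ : ℂ) • G y, vm⟫_ℂ = ⟪y, vm + (γ : ℂ) • G vm⟫_ℂ := by
      rw [inner_add_left, inner_smul_left, inner_add_right, inner_smul_right,
        Complex.conj_ofReal]
      have := hsym y vm
      simp only [ContinuousLinearMap.coe_coe] at this
      rw [this]
    rw [hsmulvm, inner_smul_right] at h1
    rw [← h1, hy]
    rw [inner_add_left, inner_add_left, inner_add_left, inner_add_left,
      hpm vp hvpP vm hvmM, hpm wp hwpP vm hvmM, horth,
      inner_eq_zero_symm.mp (hm0 vm hvmM z₀ hz₀), inner_self_eq_norm_sq_to_K]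
    simp only [Complex.ofReal_pow, RCLike.ofReal_pow]
    norm_num
  have hy_vm : ⟪y, vm⟫_ℂ = ⟪b, vm⟫_ℂ := by
    rw [hyd, inner_add_left, inner_add_left, hpm a ha vm hvmM,
      inner_eq_zero_symm.mp (hm0 vm hvmM c hc)]
    ring
  have hb_lower : ‖vm‖ ≤ s * ‖b‖ := by
    rcases eq_or_ne vm 0 with h | h
    · simp [h]; positivity
    · have h1 : ‖vm‖ ^ 2 ≤ s * (‖b‖ * ‖vm‖) := by
        have h2 : ‖(s : ℂ) * ⟪b, vm⟫_ℂ‖ = ‖((‖vm‖ ^ 2 : ℝ) : ℂ)‖ := by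
          rw [← hy_vm, hinner_y_vm]
        rw [norm_mul, Complex.norm_real, Real.norm_eq_abs,
          Complex.norm_real, Real.norm_eq_abs, abs_of_pos hs0,
          _root_.abs_of_nonneg (by positivity : (0:ℝ) ≤ ‖vm‖ ^ 2)] at h2
        calc ‖vm‖ ^ 2 = s * ‖⟪b, vm⟫_ℂ‖ := h2.symm
          _ ≤ s * (‖b‖ * ‖vm‖) :=
            mul_le_mul_of_nonneg_left (norm_inner_le_norm _ _) hs0.le
      have hvmpos : 0 < ‖vm‖ := norm_pos_iff.mpr h
      have := (mul_le_mul_iff_of_pos_right hvmpos).mp (by nlinarith : ‖vm‖ * ‖vm‖ ≤ (s * ‖b‖) * ‖vm‖)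
      exact this
  have hGb_bound : (⟪G b, b⟫_ℂ).re ≤ -(β * ‖vm‖ ^ 2 / s ^ 2) := by
    have h1 := hnegm b hb
    have h2 : ‖vm‖ / s ≤ ‖b‖ := (div_le_iff₀' hs0).mpr hb_lower
    have h3 : β * (‖vm‖ / s) ^ 2 ≤ β * ‖b‖ ^ 2 := by
      have : (0:ℝ) ≤ ‖vm‖ / s := by positivity
      gcongr
    have h4 : β * (‖vm‖ / s) ^ 2 = β * ‖vm‖ ^ 2 / s ^ 2 := by
      field_simp
    linarith
  -- expansion of the quadratic form
  have hexp : (⟪G y, y⟫_ℂ).re = (⟪G a, a⟫_ℂ).re + (⟪G b, b⟫_ℂ).re := by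
    rw [hGy, hyd]
    simp only [inner_add_left, inner_add_right]
    rw [hpm (G a) (hinvp a ha) b hb, hp0 (G a) (hinvp a ha) c hc,
      inner_eq_zero_symm.mp (hpm a ha (G b) (hinvm b hb)),
      hm0 (G b) (hinvm b hb) c hc]
    simp
  rw [hexp]
  have : β * ‖vm‖ ^ 2 / (1 - γ / κ) ^ 2 = β * ‖vm‖ ^ 2 / s ^ 2 := by rw [← hs]
  rw [this]
  linarith



variable {H : Type*} [NormedAddCommGroup H] [InnerProductSpace ℂ H]

lemma norm_sq_re_inner (x : H) : (⟪x, x⟫_ℂ).re = ‖x‖ ^ 2 := by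
  simpa using inner_self_eq_norm_sq (𝕜 := ℂ) x

lemma unique_sol [CompleteSpace H] (G : H →L[ℂ] H) (hG : IsSelfAdjoint G)
    (κ : ℝ) (hκ : 0 < κ)
    (hB : ∀ x : H, |(⟪G x, x⟫_ℂ).re| ≤ ‖x‖ ^ 2 / κ)
    (u₀ : H) (γ γ' : ℝ) (hγ : |γ| < κ) (hγ' : |γ'| ≤ κ)
    (y₀ y : H)
    (h₀ : y₀ + (γ : ℂ) • G y₀ = u₀) (h : y + (γ' : ℂ) • G y = u₀)
    (q₀ : (⟪G y₀, y₀⟫_ℂ).re = 0) (q : (⟪G y, y⟫_ℂ).re = 0) :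
    y = y₀ := by
  have hsym : ∀ p q : H, ⟪G p, q⟫_ℂ = ⟪p, G q⟫_ℂ := by
    intro p q
    have := hG.isSymmetric p q
    simpa using this
  have hre : ∀ (t : ℝ) (u x : H), (⟪u + (t : ℂ) • G u, x⟫_ℂ).re
      = (⟪u, x⟫_ℂ).re + t * (⟪G u, x⟫_ℂ).re := by
    intro t u x
    rw [inner_add_left, inner_smul_left, Complex.add_re, Complex.conj_ofReal,
      Complex.re_ofReal_mul]
  have symA : ∀ (t : ℝ) (p q : H),
      ⟪p + (t : ℂ) • G p, q⟫_ℂ = ⟪p, q + (t : ℂ) • G q⟫_ℂ := by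
    intro t p q
    rw [inner_add_left, inner_add_right, inner_smul_left, inner_smul_right,
      Complex.conj_ofReal, hsym p q]
  -- the key quadratic identity
  have key : ∀ (t : ℝ) (w x : H), w + (t : ℂ) • G w = u₀ →
      ((⟪x + (t : ℂ) • G x, x⟫_ℂ).re - 2 * (⟪u₀, x⟫_ℂ).re)
        - ((⟪w + (t : ℂ) • G w, w⟫_ℂ).re - 2 * (⟪u₀, w⟫_ℂ).re)
      = (⟪(x - w) + (t : ℂ) • G (x - w), x - w⟫_ℂ).re := by
    intro t w x hw
    have hd : (x - w) + (t : ℂ) • G (x - w)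
        = (x + (t : ℂ) • G x) - (w + (t : ℂ) • G w) := by
      rw [map_sub, smul_sub]; abel
    rw [hd, inner_sub_left, inner_sub_right, inner_sub_right]
    have e1 : (⟪x + (t : ℂ) • G x, w⟫_ℂ).re = (⟪u₀, x⟫_ℂ).re := by
      rw [symA t x w, hw, ← inner_conj_symm, Complex.conj_re]
    have e2 : (⟪w + (t : ℂ) • G w, x⟫_ℂ).re = (⟪u₀, x⟫_ℂ).re := by rw [hw]
    have e3 : (⟪w + (t : ℂ) • G w, w⟫_ℂ).re = (⟪u₀, w⟫_ℂ).re := by rw [hw]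
    simp only [Complex.sub_re]
    linarith
  -- positivity of the quadratic form
  have pos : ∀ (t : ℝ), |t| ≤ κ → ∀ d : H,
      (1 - |t| / κ) * ‖d‖ ^ 2 ≤ (⟪d + (t : ℂ) • G d, d⟫_ℂ).re := by
    intro t ht d
    have h1 := hre t d d
    rw [norm_sq_re_inner] at h1
    have h2 := hB d
    have h3 : |t| * |(⟪G d, d⟫_ℂ).re| ≤ |t| * (‖d‖ ^ 2 / κ) :=
      mul_le_mul_of_nonneg_left h2 (abs_nonneg t)
    have h4 : |t| * (‖d‖ ^ 2 / κ) = |t| / κ * ‖d‖ ^ 2 := by ring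
    have h5 : -(|t| * |(⟪G d, d⟫_ℂ).re|) ≤ t * (⟪G d, d⟫_ℂ).re := by
      rw [← abs_mul]; exact neg_abs_le _
    rw [h1]
    linarith
  -- on `Q`, the quadratic is independent of `t`
  have hQ : ∀ (t : ℝ) (x : H), (⟪G x, x⟫_ℂ).re = 0 →
      (⟪x + (t : ℂ) • G x, x⟫_ℂ).re = ‖x‖ ^ 2 := by
    intro t x hx
    rw [hre, hx, norm_sq_re_inner]; ring
  have A := key γ' y y₀ h
  have B := key γ y₀ y h₀
  rw [hQ γ' y₀ q₀, hQ γ' y q] at A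
  rw [hQ γ y q, hQ γ y₀ q₀] at B
  have pA := pos γ' hγ' (y₀ - y)
  have pB := pos γ hγ.le (y - y₀)
  have hpos1 : (0 : ℝ) ≤ (1 - |γ'| / κ) * ‖y₀ - y‖ ^ 2 := by
    have h6 : |γ'| / κ ≤ 1 := (div_le_one hκ).mpr hγ'
    have h7 := sq_nonneg ‖y₀ - y‖
    nlinarith
  have hfac : (0 : ℝ) < 1 - |γ| / κ := by
    have : |γ| / κ < 1 := (div_lt_one hκ).mpr hγ
    linarith
  have hsum0 : (1 - |γ| / κ) * ‖y - y₀‖ ^ 2 ≤ 0 := by linarith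
  have : ‖y - y₀‖ ^ 2 ≤ 0 := by
    by_contra hcon
    push_neg at hcon
    nlinarith
  have : ‖y - y₀‖ = 0 := by nlinarith [norm_nonneg (y - y₀)]
  have := norm_eq_zero.mp this
  exact sub_eq_zero.mp this
end Aux


set_option maxHeartbeats 1000000 in
/-- Proposition 5.3 (ii) together with Proposition 5.1: if both boundary-kernel
components `v⁺ ∈ N₊ = ker(I - κG)` and `v⁻ ∈ N₋ = ker(I + κG)` of `u₀` are nonzero,
then the multiplier is interior, `γ ∈ (-κ, κ)`, and the solution set is the singleton
`{(I + γG)⁻¹ u₀}`. -/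
theorem interior_singleton_solution
    {H : Type*} [NormedAddCommGroup H] [InnerProductSpace ℂ H] [CompleteSpace H]
    (G : H →L[ℂ] H) (hG : IsSelfAdjoint G) (κ : ℝ) (hκ : 0 < κ)
    (Hp Hm : Submodule ℂ H)
    (hpm : ∀ x ∈ Hp, ∀ y ∈ Hm, ⟪x, y⟫_ℂ = 0)
    (hp0 : ∀ x ∈ Hp, ∀ y ∈ LinearMap.ker (G : H →ₗ[ℂ] H), ⟪x, y⟫_ℂ = 0)
    (hm0 : ∀ x ∈ Hm, ∀ y ∈ LinearMap.ker (G : H →ₗ[ℂ] H), ⟪x, y⟫_ℂ = 0)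
    (hspan : ∀ x : H, ∃ xp ∈ Hp, ∃ xm ∈ Hm, ∃ x0 ∈ LinearMap.ker (G : H →ₗ[ℂ] H), x = xp + xm + x0)
    (hinvp : ∀ x ∈ Hp, G x ∈ Hp) (hinvm : ∀ x ∈ Hm, G x ∈ Hm)
    (hposp : ∃ α > 0, ∀ x ∈ Hp, α * ‖x‖ ^ 2 ≤ (⟪G x, x⟫_ℂ).re)
    (hnegm : ∃ β > 0, ∀ x ∈ Hm, (⟪G x, x⟫_ℂ).re ≤ -(β * ‖x‖ ^ 2))
    (hnormp : IsLUB {r : ℝ | ∃ x ∈ Hp, ‖x‖ = 1 ∧ r = ‖G x‖} (1 / κ))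
    (hnormm : IsLUB {r : ℝ | ∃ x ∈ Hm, ‖x‖ = 1 ∧ r = ‖G x‖} (1 / κ))
    (u₀ vp wp vm wm u₀0 : H)
    (hvp : vp ∈ LinearMap.ker (((1 : H →L[ℂ] H) - (κ : ℂ) • G : H →L[ℂ] H) : H →ₗ[ℂ] H))
    (hvm : vm ∈ LinearMap.ker (((1 : H →L[ℂ] H) + (κ : ℂ) • G : H →L[ℂ] H) : H →ₗ[ℂ] H))
    (hwp : wp ∈ Hp ∧ ∀ v ∈ LinearMap.ker (((1 : H →L[ℂ] H) - (κ : ℂ) • G : H →L[ℂ] H) : H →ₗ[ℂ] H), ⟪wp, v⟫_ℂ = 0)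
    (hwm : wm ∈ Hm ∧ ∀ v ∈ LinearMap.ker (((1 : H →L[ℂ] H) + (κ : ℂ) • G : H →L[ℂ] H) : H →ₗ[ℂ] H), ⟪wm, v⟫_ℂ = 0)
    (hu₀0 : u₀0 ∈ LinearMap.ker (G : H →ₗ[ℂ] H))
    (hdecomp : u₀ = vp + wp + vm + wm + u₀0)
    (hvp0 : vp ≠ 0) (hvm0 : vm ≠ 0) :
    ∃ γ ∈ Set.Ioo (-κ) κ, ∃ y₀ : H,
      (((1 : H →L[ℂ] H) + (γ : ℂ) • G) y₀ = u₀ ∧ ⟪G y₀, y₀⟫_ℂ = 0) ∧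
      {y : H | ⟪G y, y⟫_ℂ = 0 ∧
          ∃ γ' ∈ Set.Icc (-κ) κ, ((1 : H →L[ℂ] H) + (γ' : ℂ) • G) y = u₀}
        = {y₀} := by
  classical
  obtain ⟨α, hα, hpospα⟩ := hposp
  obtain ⟨β, hβ, hnegmβ⟩ := hnegm
  have hκC : (κ : ℂ) ≠ 0 := by exact_mod_cast hκ.ne'
  have hsym : ∀ p q : H, ⟪G p, q⟫_ℂ = ⟪p, G q⟫_ℂ := fun p q => by
    simpa using hG.isSymmetric p q
  have hp0' : ∀ x ∈ Hp, ∀ z : H, G z = 0 → ⟪x, z⟫_ℂ = 0 := fun x hx z hz =>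
    hp0 x hx z (LinearMap.mem_ker.mpr hz)
  have hm0' : ∀ x ∈ Hm, ∀ z : H, G z = 0 → ⟪x, z⟫_ℂ = 0 := fun x hx z hz =>
    hm0 x hx z (LinearMap.mem_ker.mpr hz)
  have hu₀0' : G u₀0 = 0 := LinearMap.mem_ker.mp hu₀0
  have hspan' : ∀ x : H, ∃ p ∈ Hp, ∃ m ∈ Hm, ∃ z, G z = 0 ∧ x = p + m + z := by
    intro x
    obtain ⟨p, hp, m, hm, z, hz, hxx⟩ := hspan x
    exact ⟨p, hp, m, hm, z, LinearMap.mem_ker.mp hz, hxx⟩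
  have hposp0 : ∀ x ∈ Hp, 0 ≤ (⟪G x, x⟫_ℂ).re := fun x hx =>
    le_trans (by positivity) (hpospα x hx)
  have hnegm0 : ∀ x ∈ Hm, (⟪G x, x⟫_ℂ).re ≤ 0 := fun x hx =>
    le_trans (hnegmβ x hx) (neg_nonpos.mpr (by positivity))
  -- norm bounds from the LUB hypotheses
  have hBP : ∀ S : Submodule ℂ H,
      IsLUB {r : ℝ | ∃ x ∈ S, ‖x‖ = 1 ∧ r = ‖G x‖} (1 / κ) →
      ∀ x ∈ S, ‖G x‖ ≤ ‖x‖ / κ := by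
    intro S hS x hx
    rcases eq_or_ne x 0 with h | h
    · simp [h]
    · have hx0 : (0 : ℝ) < ‖x‖ := norm_pos_iff.mpr h
      set u : H := ((‖x‖⁻¹ : ℝ) : ℂ) • x with hu
      have hun : ‖u‖ = 1 := by
        rw [hu, norm_smul, Complex.norm_real, Real.norm_eq_abs,
          abs_of_pos (inv_pos.mpr hx0)]
        field_simp
      have hle : ‖G u‖ ≤ 1 / κ :=
        hS.1 ⟨u, Submodule.smul_mem S _ hx, hun, rfl⟩
      have hGu : ‖G u‖ = ‖x‖⁻¹ * ‖G x‖ := by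
        rw [hu, map_smul, norm_smul, Complex.norm_real, Real.norm_eq_abs,
          abs_of_pos (inv_pos.mpr hx0)]
      rw [hGu] at hle
      have h2 := mul_le_mul_of_nonneg_left hle hx0.le
      calc ‖G x‖ = ‖x‖ * (‖x‖⁻¹ * ‖G x‖) := by field_simp
        _ ≤ ‖x‖ * (1 / κ) := h2
        _ = ‖x‖ / κ := by ring
  have hBp := hBP Hp hnormp
  have hBm := hBP Hm hnormm
  have hB : ∀ x : H, ‖G x‖ ≤ ‖x‖ / κ := by
    intro x
    obtain ⟨p, hp, m, hm, z, hz, hxx⟩ := hspan' x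
    have hGx : G x = G p + G m := by rw [hxx]; simp [map_add, hz]
    have hpyth1 : ‖G p + G m‖ ^ 2 = ‖G p‖ ^ 2 + ‖G m‖ ^ 2 := by
      rw [norm_add_sq (𝕜 := ℂ), hpm _ (hinvp p hp) _ (hinvm m hm)]
      simp
    have hpyth2 : ‖x‖ ^ 2 = ‖p‖ ^ 2 + ‖m‖ ^ 2 + ‖z‖ ^ 2 := by
      rw [hxx, norm_add_sq (𝕜 := ℂ), norm_add_sq (𝕜 := ℂ), inner_add_left,
        hpm p hp m hm, hp0' p hp z hz, hm0' m hm z hz]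
      simp
      try ring
    have h1 : ‖G p‖ ^ 2 ≤ (‖p‖ / κ) ^ 2 := by
      have := hBp p hp
      gcongr <;> positivity
    have h2 : ‖G m‖ ^ 2 ≤ (‖m‖ / κ) ^ 2 := by
      have := hBm m hm
      gcongr <;> positivity
    have hsq : ‖G x‖ ^ 2 ≤ (‖x‖ / κ) ^ 2 := by
      have e : ∀ a : ℝ, (a / κ) ^ 2 = a ^ 2 / κ ^ 2 := fun a => by field_simp
      rw [hGx, hpyth1, e]
      rw [e] at h1
      rw [e] at h2
      have hz2 : (0 : ℝ) ≤ ‖z‖ ^ 2 := sq_nonneg _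
      have hκ2 : (0 : ℝ) < κ ^ 2 := by positivity
      rw [hpyth2]
      have hfin : (‖p‖ ^ 2 + ‖m‖ ^ 2) / κ ^ 2 ≤ (‖p‖ ^ 2 + ‖m‖ ^ 2 + ‖z‖ ^ 2) / κ ^ 2 :=
        (div_le_div_iff_of_pos_right hκ2).mpr (by linarith)
      have hadd : ‖p‖ ^ 2 / κ ^ 2 + ‖m‖ ^ 2 / κ ^ 2 = (‖p‖ ^ 2 + ‖m‖ ^ 2) / κ ^ 2 := by
        ring
      linarith [h1, h2]
    exact le_of_pow_le_pow_left₀ two_ne_zero (by positivity) hsq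
  have hBre : ∀ x : H, |(⟪G x, x⟫_ℂ).re| ≤ ‖x‖ ^ 2 / κ := by
    intro x
    calc |(⟪G x, x⟫_ℂ).re| ≤ ‖⟪G x, x⟫_ℂ‖ := Complex.abs_re_le_norm _
      _ ≤ ‖G x‖ * ‖x‖ := norm_inner_le_norm _ _
      _ ≤ (‖x‖ / κ) * ‖x‖ := mul_le_mul_of_nonneg_right (hB x) (norm_nonneg _)
      _ = ‖x‖ ^ 2 / κ := by ring
  
  -- eigenvector facts
  have hvp2 : vp = (κ : ℂ) • G vp := by
    have h := hvp
    rw [LinearMap.mem_ker] at h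
    have h2 : vp - (κ : ℂ) • G vp = 0 := by
      simpa [ContinuousLinearMap.sub_apply, ContinuousLinearMap.smul_apply] using h
    exact sub_eq_zero.mp h2
  have hvm2 : vm + (κ : ℂ) • G vm = 0 := by
    have h := hvm
    rw [LinearMap.mem_ker] at h
    simpa [ContinuousLinearMap.add_apply, ContinuousLinearMap.smul_apply] using h
  have hGvp : G vp = (κ : ℂ)⁻¹ • vp := by
    conv_lhs => rw [← inv_smul_smul₀ hκC (G vp)]
    rw [← hvp2]
  have hGvm : G vm = -((κ : ℂ)⁻¹ • vm) := by
    have h : (κ : ℂ) • G vm = -vm := eq_neg_of_add_eq_zero_right hvm2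
    conv_lhs => rw [← inv_smul_smul₀ hκC (G vm)]
    rw [h, smul_neg]
  -- membership of the eigenvectors
  have hvpP : vp ∈ Hp := by
    obtain ⟨p, hp, m, hm, z, hz, hxx⟩ := hspan' vp
    have hsum : (p - (κ : ℂ) • G p) + (m - (κ : ℂ) • G m) + z = 0 := by
      have h1 : vp - (κ : ℂ) • G vp = 0 := by rw [← hvp2]; exact sub_self vp
      rw [hxx] at h1
      simp only [map_add, hz, add_zero, smul_add] at h1
      rw [show (p - (κ : ℂ) • G p) + (m - (κ : ℂ) • G m) + z
          = p + m + z - ((κ : ℂ) • G p + (κ : ℂ) • G m) from by abel]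
      exact h1
    have hPmem : p - (κ : ℂ) • G p ∈ Hp :=
      Submodule.sub_mem _ hp (Submodule.smul_mem _ _ (hinvp p hp))
    have hMmem : m - (κ : ℂ) • G m ∈ Hm :=
      Submodule.sub_mem _ hm (Submodule.smul_mem _ _ (hinvm m hm))
    obtain ⟨e1, e2, e3⟩ := triple_zero (hpm _ hPmem _ hMmem)
      (hp0' _ hPmem z hz) (hm0' _ hMmem z hz) hsum
    have hm2 : m = (κ : ℂ) • G m := sub_eq_zero.mp e2
    have hmz : m = 0 := by
      by_contra hne
      have hGm : G m = (κ : ℂ)⁻¹ • m := by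
        conv_lhs => rw [← inv_smul_smul₀ hκC (G m)]
        rw [← hm2]
      have hrm : (⟪G m, m⟫_ℂ).re = κ⁻¹ * ‖m‖ ^ 2 := by
        rw [hGm, show ((κ : ℂ)⁻¹) = ((κ⁻¹ : ℝ) : ℂ) from by push_cast; ring,
          inner_smul_left, Complex.conj_ofReal, Complex.re_ofReal_mul,
          norm_sq_re_inner]
      have hneg := hnegmβ m hm
      have hmpos : (0 : ℝ) < ‖m‖ := norm_pos_iff.mpr hne
      nlinarith [mul_pos (inv_pos.mpr hκ) (pow_pos hmpos 2), mul_pos hβ (pow_pos hmpos 2)]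
    rw [hxx, hmz, e3, add_zero, add_zero]
    exact hp
  have hvmM : vm ∈ Hm := by
    obtain ⟨p, hp, m, hm, z, hz, hxx⟩ := hspan' vm
    have hsum : (p + (κ : ℂ) • G p) + (m + (κ : ℂ) • G m) + z = 0 := by
      have h1 := hvm2
      rw [hxx] at h1
      simp only [map_add, hz, add_zero, smul_add] at h1
      rw [show (p + (κ : ℂ) • G p) + (m + (κ : ℂ) • G m) + z
          = p + m + z + ((κ : ℂ) • G p + (κ : ℂ) • G m) from by abel]
      exact h1
    have hPmem : p + (κ : ℂ) • G p ∈ Hp :=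
      Submodule.add_mem _ hp (Submodule.smul_mem _ _ (hinvp p hp))
    have hMmem : m + (κ : ℂ) • G m ∈ Hm :=
      Submodule.add_mem _ hm (Submodule.smul_mem _ _ (hinvm m hm))
    obtain ⟨e1, e2, e3⟩ := triple_zero (hpm _ hPmem _ hMmem)
      (hp0' _ hPmem z hz) (hm0' _ hMmem z hz) hsum
    have hp2 : (κ : ℂ) • G p = -p := eq_neg_of_add_eq_zero_right e1
    have hpz : p = 0 := by
      by_contra hne
      have hGp : G p = -((κ : ℂ)⁻¹ • p) := by
        conv_lhs => rw [← inv_smul_smul₀ hκC (G p)]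
        rw [hp2, smul_neg]
      have hrp : (⟪G p, p⟫_ℂ).re = -(κ⁻¹ * ‖p‖ ^ 2) := by
        rw [hGp, inner_neg_left, show ((κ : ℂ)⁻¹) = ((κ⁻¹ : ℝ) : ℂ) from by push_cast; ring,
          inner_smul_left, Complex.conj_ofReal, Complex.neg_re, Complex.re_ofReal_mul,
          norm_sq_re_inner]
      have hpos := hpospα p hp
      have hppos : (0 : ℝ) < ‖p‖ := norm_pos_iff.mpr hne
      nlinarith [mul_pos (inv_pos.mpr hκ) (pow_pos hppos 2), mul_pos hα (pow_pos hppos 2)]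
    rw [hxx, hpz, e3, zero_add, add_zero]
    exact hm
    -- invertibility of `1 + γ G` for `|γ| < κ`
  have hGnorm : ‖G‖ ≤ 1 / κ := by
    apply ContinuousLinearMap.opNorm_le_bound _ (by positivity)
    intro x
    calc ‖G x‖ ≤ ‖x‖ / κ := hB x
      _ = 1 / κ * ‖x‖ := by ring
  have hunit : ∀ γ : ℝ, |γ| < κ → IsUnit ((1 : H →L[ℂ] H) + (γ : ℂ) • G) := by
    intro γ hγ
    have hlt : ‖-((γ : ℂ) • G)‖ < 1 := by
      rw [norm_neg, norm_smul, Complex.norm_real, Real.norm_eq_abs]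
      have h1 : |γ| * ‖G‖ ≤ |γ| * (1 / κ) :=
        mul_le_mul_of_nonneg_left hGnorm (abs_nonneg γ)
      have h2 : |γ| * (1 / κ) < 1 := by
        rw [show |γ| * (1 / κ) = |γ| / κ from by ring]
        exact (div_lt_one hκ).mpr hγ
      linarith
    have h := (Units.oneSub _ hlt).isUnit
    have he : ((Units.oneSub (-((γ : ℂ) • G)) hlt : (H →L[ℂ] H)ˣ) : H →L[ℂ] H)
        = (1 : H →L[ℂ] H) + (γ : ℂ) • G := by
      show (1 : H →L[ℂ] H) - -((γ : ℂ) • G) = (1 : H →L[ℂ] H) + (γ : ℂ) • G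
      rw [sub_neg_eq_add]
    rwa [he] at h
  set Y : ℝ → H := fun γ => Ring.inverse ((1 : H →L[ℂ] H) + (γ : ℂ) • G) u₀ with hYdef
  have hYeq : ∀ γ : ℝ, |γ| < κ → ((1 : H →L[ℂ] H) + (γ : ℂ) • G) (Y γ) = u₀ := by
    intro γ hγ
    have h := Ring.mul_inverse_cancel _ (hunit γ hγ)
    calc ((1 : H →L[ℂ] H) + (γ : ℂ) • G) (Y γ)
        = (((1 : H →L[ℂ] H) + (γ : ℂ) • G)
            * Ring.inverse ((1 : H →L[ℂ] H) + (γ : ℂ) • G)) u₀ := rfl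
      _ = u₀ := by rw [h]; rfl
  have hYeq' : ∀ γ : ℝ, |γ| < κ → Y γ + (γ : ℂ) • G (Y γ) = u₀ := by
    intro γ hγ
    have h := hYeq γ hγ
    simpa [ContinuousLinearMap.add_apply, ContinuousLinearMap.smul_apply] using h
  have hYcont : ∀ γ : ℝ, |γ| < κ → ContinuousAt Y γ := by
    intro γ hγ
    have h1 : Continuous (fun t : ℝ => (1 : H →L[ℂ] H) + (t : ℂ) • G) :=
      continuous_const.add (Complex.continuous_ofReal.smul continuous_const)
    have h2 : ContinuousAt Ring.inverse
        ((fun t : ℝ => (1 : H →L[ℂ] H) + (t : ℂ) • G) γ) := by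
      have hu := hunit γ hγ
      have h3 := NormedRing.inverse_continuousAt hu.unit
      rwa [IsUnit.unit_spec] at h3
    have h3 : ContinuousAt (fun t : ℝ =>
        Ring.inverse ((1 : H →L[ℂ] H) + (t : ℂ) • G)) γ :=
      ContinuousAt.comp (g := Ring.inverse)
        (f := fun t : ℝ => (1 : H →L[ℂ] H) + (t : ℂ) • G) h2 h1.continuousAt
    exact ((ContinuousLinearMap.apply ℂ H u₀).continuous.continuousAt).comp h3
  have hfcont : ∀ γ : ℝ, |γ| < κ →
      ContinuousAt (fun t : ℝ => (⟪G (Y t), Y t⟫_ℂ).re) γ := by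
    intro γ hγ
    exact (Complex.continuous_re.continuousAt).comp
      (((G.continuous.continuousAt).comp (hYcont γ hγ)).inner (hYcont γ hγ))
  have hvmnorm : (0:ℝ) < ‖vm‖ := norm_pos_iff.mpr hvm0
  have hvpnorm : (0:ℝ) < ‖vp‖ := norm_pos_iff.mpr hvp0
  -- choice of the right endpoint γ₂
  obtain ⟨t2, ht2pos, ht2le, ht2sq⟩ :
      ∃ t : ℝ, 0 < t ∧ t ≤ 1 ∧
        (‖vp + wp‖ ^ 2 / κ) * t ^ 2 < β * ‖vm‖ ^ 2 := by
    refine ⟨min 1 (Real.sqrt ((β * ‖vm‖ ^ 2) / (‖vp + wp‖ ^ 2 / κ + 1))),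
      lt_min one_pos (Real.sqrt_pos.mpr (by positivity)), min_le_left _ _, ?_⟩
    set X : ℝ := (β * ‖vm‖ ^ 2) / (‖vp + wp‖ ^ 2 / κ + 1) with hX
    have hXpos : 0 < X := by positivity
    have h1 : min 1 (Real.sqrt X) ≤ Real.sqrt X := min_le_right _ _
    have h2 : (min 1 (Real.sqrt X)) ^ 2 ≤ X := by
      have h3 : (min 1 (Real.sqrt X)) ^ 2 ≤ (Real.sqrt X) ^ 2 := by
        have h0 : 0 ≤ min 1 (Real.sqrt X) :=
          le_min zero_le_one (Real.sqrt_nonneg _)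
        gcongr
      rwa [Real.sq_sqrt hXpos.le] at h3
    have hXeq : X * (‖vp + wp‖ ^ 2 / κ + 1) = β * ‖vm‖ ^ 2 := by
      rw [hX]; field_simp
    have hC0 : (0:ℝ) ≤ ‖vp + wp‖ ^ 2 / κ := by positivity
    nlinarith [h2, hXpos]
  -- choice of the left endpoint γ₁
  obtain ⟨t1, ht1pos, ht1le, ht1sq⟩ :
      ∃ t : ℝ, 0 < t ∧ t ≤ 1 ∧
        (‖vm + wm‖ ^ 2 / κ) * t ^ 2 < α * ‖vp‖ ^ 2 := by
    refine ⟨min 1 (Real.sqrt ((α * ‖vp‖ ^ 2) / (‖vm + wm‖ ^ 2 / κ + 1))),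
      lt_min one_pos (Real.sqrt_pos.mpr (by positivity)), min_le_left _ _, ?_⟩
    set X : ℝ := (α * ‖vp‖ ^ 2) / (‖vm + wm‖ ^ 2 / κ + 1) with hX
    have hXpos : 0 < X := by positivity
    have h2 : (min 1 (Real.sqrt X)) ^ 2 ≤ X := by
      have h3 : (min 1 (Real.sqrt X)) ^ 2 ≤ (Real.sqrt X) ^ 2 := by
        have h0 : 0 ≤ min 1 (Real.sqrt X) :=
          le_min zero_le_one (Real.sqrt_nonneg _)
        gcongr
        exact min_le_right _ _
      rwa [Real.sq_sqrt hXpos.le] at h3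
    have hXeq : X * (‖vm + wm‖ ^ 2 / κ + 1) = α * ‖vp‖ ^ 2 := by
      rw [hX]; field_simp
    have hC0 : (0:ℝ) ≤ ‖vm + wm‖ ^ 2 / κ := by positivity
    nlinarith [h2, hXpos]
  set γ2 : ℝ := κ * (1 - t2) with hγ2def
  set γ1 : ℝ := -(κ * (1 - t1)) with hγ1def
  have hγ2nonneg : 0 ≤ γ2 := by rw [hγ2def]; nlinarith
  have hγ2lt : γ2 < κ := by rw [hγ2def]; nlinarith
  have hγ2abs : |γ2| < κ := by rw [_root_.abs_of_nonneg hγ2nonneg]; exact hγ2lt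
  have hγ1nonpos : γ1 ≤ 0 := by rw [hγ1def]; nlinarith
  have hγ1gt : -κ < γ1 := by rw [hγ1def]; nlinarith
  have hγ1abs : |γ1| < κ := abs_lt.mpr ⟨hγ1gt, lt_of_le_of_lt hγ1nonpos hκ⟩
  have hsγ2 : 1 - γ2 / κ = t2 := by
    rw [hγ2def]; field_simp; ring
  -- estimate at γ₂
  have hEq2 : Y γ2 + (γ2 : ℂ) • G (Y γ2) = vp + wp + vm + wm + u₀0 := by
    rw [← hdecomp]; exact hYeq' γ2 hγ2abs
  have hf2 := key_estimate G hG κ β hκ hβ.le Hp Hm hpm hp0' hm0' hspan'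
    hinvp hinvm hposp0 hnegmβ hBp vp wp vm wm u₀0 hvpP hwp.1 hvmM hwm.1
    hu₀0' hGvm (hwm.2 vm hvm) γ2 hγ2nonneg hγ2lt (Y γ2) hEq2
  rw [hsγ2] at hf2
  have hf2neg : (⟪G (Y γ2), Y γ2⟫_ℂ).re < 0 := by
    have h2 : ‖vp + wp‖ ^ 2 / κ < β * ‖vm‖ ^ 2 / t2 ^ 2 :=
      (lt_div_iff₀ (by positivity)).mpr ht2sq
    linarith
  -- estimate at γ₁, by applying the key estimate to `-G`
  have hEq1 : Y γ1 + ((κ * (1 - t1) : ℝ) : ℂ) • (-G) (Y γ1)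
      = vm + wm + vp + wp + u₀0 := by
    have h := hYeq' γ1 hγ1abs
    rw [hdecomp] at h
    have hsc : ((κ * (1 - t1) : ℝ) : ℂ) = -((γ1 : ℝ) : ℂ) := by
      rw [hγ1def]; push_cast; ring
    rw [hsc, ContinuousLinearMap.neg_apply, smul_neg, neg_smul, neg_neg]
    rw [h]; abel
  have hf1 := key_estimate (-G) hG.neg κ α hκ hα.le Hm Hp
    (fun x hx y hy => inner_eq_zero_symm.mp (hpm y hy x hx))
    (fun x hx z hz => hm0' x hx z (by simpa using hz))
    (fun x hx z hz => hp0' x hx z (by simpa using hz))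
    (by
      intro x
      obtain ⟨p, hp, m, hm, z, hz, hxx⟩ := hspan' x
      exact ⟨m, hm, p, hp, z, by simpa using hz, by rw [hxx]; abel⟩)
    (fun x hx => by
      rw [ContinuousLinearMap.neg_apply]; exact Submodule.neg_mem _ (hinvm x hx))
    (fun x hx => by
      rw [ContinuousLinearMap.neg_apply]; exact Submodule.neg_mem _ (hinvp x hx))
    (fun x hx => by
      rw [ContinuousLinearMap.neg_apply, inner_neg_left, Complex.neg_re]
      linarith [hnegm0 x hx])
    (fun x hx => by
      rw [ContinuousLinearMap.neg_apply, inner_neg_left, Complex.neg_re]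
      linarith [hpospα x hx])
    (fun x hx => by
      rw [ContinuousLinearMap.neg_apply, norm_neg]; exact hBm x hx)
    vm wm vp wp u₀0 hvmM hwm.1 hvpP hwp.1
    (by rw [ContinuousLinearMap.neg_apply, hu₀0', neg_zero])
    (by rw [ContinuousLinearMap.neg_apply, hGvp])
    (hwp.2 vp hvp)
    (κ * (1 - t1)) (by nlinarith) (by nlinarith)
    (Y γ1) hEq1
  have hsγ1 : 1 - (κ * (1 - t1)) / κ = t1 := by field_simp; ring
  rw [hsγ1] at hf1
  have hf1' : -(⟪G (Y γ1), Y γ1⟫_ℂ).re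
      ≤ ‖vm + wm‖ ^ 2 / κ - α * ‖vp‖ ^ 2 / t1 ^ 2 := by
    have h := hf1
    rwa [ContinuousLinearMap.neg_apply, inner_neg_left, Complex.neg_re] at h
  have hf1pos : 0 < (⟪G (Y γ1), Y γ1⟫_ℂ).re := by
    have h2 : ‖vm + wm‖ ^ 2 / κ < α * ‖vp‖ ^ 2 / t1 ^ 2 :=
      (lt_div_iff₀ (by positivity)).mpr ht1sq
    linarith
  -- intermediate value theorem
  have hγ1γ2 : γ1 ≤ γ2 := le_trans hγ1nonpos hγ2nonneg
  have hsubset : Set.Icc γ1 γ2 ⊆ {t : ℝ | |t| < κ} := by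
    intro t ht
    exact abs_lt.mpr ⟨lt_of_lt_of_le hγ1gt ht.1, lt_of_le_of_lt ht.2 hγ2lt⟩
  have hconton : ContinuousOn (fun t : ℝ => (⟪G (Y t), Y t⟫_ℂ).re) (Set.Icc γ1 γ2) :=
    fun t ht => (hfcont t (hsubset ht)).continuousWithinAt
  have hival := intermediate_value_Icc' hγ1γ2 hconton
  have h0mem : (0 : ℝ) ∈ Set.Icc ((⟪G (Y γ2), Y γ2⟫_ℂ).re) ((⟪G (Y γ1), Y γ1⟫_ℂ).re) :=
    ⟨hf2neg.le, hf1pos.le⟩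
  obtain ⟨γ₀, hγ₀mem, hfγ₀⟩ := hival h0mem
  have hγ₀abs : |γ₀| < κ := hsubset hγ₀mem
  have hγ₀Ioo : γ₀ ∈ Set.Ioo (-κ) κ := by
    have := abs_lt.mp hγ₀abs
    exact ⟨this.1, this.2⟩
  -- the value of the quadratic form is really zero (as a complex number)
  have hreal : ∀ x : H, (⟪G x, x⟫_ℂ).im = 0 := by
    intro x
    have h1 : (starRingEnd ℂ) ⟪G x, x⟫_ℂ = ⟪G x, x⟫_ℂ := by
      rw [inner_conj_symm]
      exact (hsym x x).symm
    exact (Complex.conj_eq_iff_im.mp h1)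
  have hq₀ : ⟪G (Y γ₀), Y γ₀⟫_ℂ = 0 := by
    apply Complex.ext
    · exact hfγ₀
    · simpa using hreal (Y γ₀)
  refine ⟨γ₀, hγ₀Ioo, Y γ₀, ⟨⟨hYeq γ₀ hγ₀abs, hq₀⟩, ?_⟩⟩
  -- uniqueness
  apply Set.eq_singleton_iff_unique_mem.mpr
  constructor
  · exact ⟨hq₀, γ₀, ⟨hγ₀Ioo.1.le, hγ₀Ioo.2.le⟩, hYeq γ₀ hγ₀abs⟩
  · rintro y' ⟨hq', γ', ⟨hg1, hg2⟩, heq⟩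
    have heq' : y' + (γ' : ℂ) • G y' = u₀ := by
      rw [← heq]
      simp [ContinuousLinearMap.add_apply, ContinuousLinearMap.smul_apply]
    exact unique_sol G hG κ hκ hBre u₀ γ₀ γ' hγ₀abs (abs_le.mpr ⟨hg1, hg2⟩)
      (Y γ₀) y' (hYeq' γ₀ hγ₀abs) heq'
      (by rw [hq₀]; rfl) (by rw [hq']; rfl)
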